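/- Let M be an additive abelian group, S a submonoid of M, and m an element of the subgroup of M generated by S. If there exists an integer k ≥ 1 such that k•m ∈ Int(S), then there exists N ∈ ℕ such that n•m ∈ S for every integer n ≥ N. -/

import Mathlib

/-- The *interior* of a subset `S` of an additive commutative monoid:
`{x ∈ S | ∀ y ∈ S, ∃ n ∈ ℕ, ∃ z ∈ S, n • x = y + z}`. -/
def setInterior {M : Type*} [AddCommMonoid M] (S : Set M) : Set M :=
  {x | x ∈ S ∧ ∀ y ∈ S, ∃ n : ℕ, ∃ z ∈ S, n • x = y + z}

private lemma exists_sub_of_mem_closure {M : Type*} [AddCommGroup M]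
    (S : AddSubmonoid M) {m : M} (hm : m ∈ AddSubgroup.closure (S : Set M)) :
    ∃ s ∈ S, ∃ t ∈ S, m = s - t := by
  induction hm using AddSubgroup.closure_induction with
  | mem x hx => exact ⟨x, hx, 0, S.zero_mem, by simp⟩
  | zero => exact ⟨0, S.zero_mem, 0, S.zero_mem, by simp⟩
  | add x y _ _ hx hy =>
    obtain ⟨a, ha, b, hb, rfl⟩ := hx
    obtain ⟨c, hc, d, hd, rfl⟩ := hy
    exact ⟨a + c, S.add_mem ha hc, b + d, S.add_mem hb hd, by abel⟩
  | neg x _ hx =>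
    obtain ⟨a, ha, b, hb, rfl⟩ := hx
    exact ⟨b, hb, a, ha, by abel⟩

/-- If `m` lies in the subgroup generated by `S` and some positive multiple of `m`
lies in `Int(S)`, then `n • m ∈ S` for all `n` large enough. -/
theorem nsmul_mem_of_nsmul_mem_setInterior {M : Type*} [AddCommGroup M]
    (S : AddSubmonoid M) (m : M) (hm : m ∈ AddSubgroup.closure (S : Set M))
    (h : ∃ k : ℕ, 1 ≤ k ∧ k • m ∈ setInterior (S : Set M)) :
    ∃ N : ℕ, ∀ n : ℕ, N ≤ n → n • m ∈ S := by
  obtain ⟨k, hk1, hkS, hkint⟩ := h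
  obtain ⟨s, hs, t, ht, hmst⟩ := exists_sub_of_mem_closure S hm
  -- for each i, find c i such that (c i * k + i) • m ∈ S
  have key : ∀ i : ℕ, ∃ c : ℕ, ((c * k + i) • m ∈ S) := by
    intro i
    obtain ⟨c, z, hz, hcz⟩ := hkint (i • t) (S.nsmul_mem ht i)
    refine ⟨c, ?_⟩
    have : (c * k + i) • m = i • s + z := by
      rw [add_smul, mul_smul] at *
      rw [hcz, hmst]
      rw [smul_sub]
      abel
    rw [this]
    exact S.add_mem (S.nsmul_mem hs i) hz
  choose c hc using key
  -- N = k * (max of c i over i < k + 1)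
  set C := (Finset.range k).sup c with hC
  refine ⟨k * (C + 1), fun n hn => ?_⟩
  have hkpos : 0 < k := hk1
  have hi : n % k < k := Nat.mod_lt _ hkpos
  have hq : C ≤ n / k := by
    have : k * (C + 1) ≤ n := hn
    have h2 : C + 1 ≤ n / k := Nat.le_div_iff_mul_le hkpos |>.2 (by linarith [this])
    omega
  have hci : c (n % k) ≤ C := Finset.le_sup (Finset.mem_range.mpr hi)
  have hcq : c (n % k) ≤ n / k := hci.trans hq
  obtain ⟨d, hd⟩ : ∃ d, n / k = c (n % k) + d := ⟨n / k - c (n % k), by omega⟩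
  have hn_eq : n = (c (n % k) * k + n % k) + d * k := by
    have h0 := Nat.div_add_mod n k
    rw [hd, Nat.mul_add, Nat.mul_comm k, Nat.mul_comm k d] at h0
    omega
  rw [hn_eq, add_smul, mul_smul]
  exact S.add_mem (hc _) (S.nsmul_mem hkS _)
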